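/- (Monotonicity of delay) Let D = 1, A ≥ 1, and let N = n_λ...n_0 and N' = n'_λ...n'_0 be representations over {-1,0,1} such that n_k = n'_k for all i ≤ k ≤ j (with i > 0), both N and N' have some nonzero digit below index i, and δ(N, i−1) ≥ δ(N', i−1). Then δ(N, j) ≥ δ(N', j). -/
import Mathlib


noncomputable def T (D A : ℝ) (d : ℕ → ℤ) : ℕ → ℝ
  | 0 => if d 0 = 0 then 0 else (((d 0).natAbs : ℝ) - 1) * A
  | i + 1 =>
      if d (i + 1) = 0 then T D A d i
      else if ∀ j < i + 1, d j = 0 then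
        ((i : ℝ) + 1) * D + (((d (i + 1)).natAbs : ℝ) - 1) * A
      else max (T D A d i) (((i : ℝ) + 1) * D) + ((d (i + 1)).natAbs : ℝ) * A

noncomputable def delta (A : ℝ) (d : ℕ → ℤ) : ℕ → ℝ
  | 0 => 0
  | i + 1 =>
      if d (i + 1) = 0 then delta A d i - 1
      else if ∀ j < i + 1, d j = 0 then 0
      else max (delta A d i + (A - 1)) A

def val (d : ℕ → ℤ) (lam : ℕ) : ℤ := ∑ i ∈ Finset.range (lam + 1), d i * 2 ^ i

/-- Monotonicity of delay: if two {-1,0,1}-representations agree on digits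
i..j, both have a nonzero digit below i, and δ(N,i−1) ≥ δ(N',i−1), then
δ(N,j) ≥ δ(N',j). -/
theorem stmt7 (A : ℝ) (hA : 1 ≤ A) (d d' : ℕ → ℤ)
    (hd : ∀ k, d k = -1 ∨ d k = 0 ∨ d k = 1)
    (hd' : ∀ k, d' k = -1 ∨ d' k = 0 ∨ d' k = 1)
    (i j : ℕ) (hi : 0 < i) (hij : i ≤ j)
    (heq : ∀ k, i ≤ k → k ≤ j → d k = d' k)
    (hp : ∃ p < i, d p ≠ 0) (hq : ∃ q < i, d' q ≠ 0)
    (hdel : delta A d' (i - 1) ≤ delta A d (i - 1)) :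
    delta A d' j ≤ delta A d j := by
  have key : ∀ m, i - 1 ≤ m → (∀ k, i ≤ k → k ≤ m → d k = d' k) →
      delta A d' m ≤ delta A d m := by
    intro m hm
    induction m, hm using Nat.le_induction with
    | base => intro _; exact hdel
    | succ m hm ih =>
      intro he
      have hdm : d (m + 1) = d' (m + 1) := he (m + 1) (by omega) le_rfl
      have hnz : ¬ (∀ j < m + 1, d j = 0) := by
        obtain ⟨p, hp1, hp2⟩ := hp
        intro h; exact hp2 (h p (by omega))
      have hnz' : ¬ (∀ j < m + 1, d' j = 0) := by
        obtain ⟨q, hq1, hq2⟩ := hq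
        intro h; exact hq2 (h q (by omega))
      have ihm : delta A d' m ≤ delta A d m :=
        ih (fun k hk1 hk2 => he k hk1 (by omega))
      simp only [delta]
      rw [hdm]
      by_cases h0 : d' (m + 1) = 0
      · simp only [h0, if_true, if_pos rfl]; linarith
      · simp only [h0, if_neg, if_false, hnz, hnz']
        exact max_le_max (by linarith) le_rfl
  exact key j (by omega) heq
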